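/- w(ω × ω × ω) = ω², where the triple product of ω carries the componentwise order. -/

import Mathlib

universe u

open Ordinal

/-- The rank of a well-founded relation: the least ordinal `γ` admitting a
strictly `r`-decreasing... i.e. `r a b → f a < f b`; equals `sup (rank a + 1)`. -/
noncomputable def relRank {β : Type u} (r : β → β → Prop) : Ordinal.{u} :=
  haveI := Classical.propDecidable (WellFounded r)
  if h : WellFounded r then ⨆ a : β, Order.succ ((h.apply a).rank) else 0

/-- `extRel T s t` : `s` strictly extends `t` (both in tree `T`). -/
def extRel {α : Type u} (T : Set (List α)) (s t : T) : Prop :=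
  t.1 <+: s.1 ∧ t.1 ≠ s.1

/-- Rank of a tree of finite sequences ordered by the initial segment relation. -/
noncomputable def treeRank {α : Type u} (T : Set (List α)) : Ordinal.{u} :=
  relRank (extRel T)

/-- Non-empty finite sequences of pairwise incomparable elements. -/
def IncSeqs (P : Type u) [Preorder P] : Set (List P) :=
  {l | l ≠ [] ∧ l.Pairwise fun x y => ¬ x ≤ y ∧ ¬ y ≤ x}

/-- Non-empty strictly descending finite sequences. -/
def DecSeqs (P : Type u) [Preorder P] : Set (List P) :=
  {l | l ≠ [] ∧ l.Pairwise fun x y => y < x}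

/-- Non-empty bad sequences. -/
def BadSeqs (P : Type u) [Preorder P] : Set (List P) :=
  {l | l ≠ [] ∧ l.Pairwise fun x y => ¬ x ≤ y}

/-- Width of a FAC (quasi-)order: the rank of its tree of antichain sequences. -/
noncomputable def width (P : Type u) [Preorder P] : Ordinal.{u} := treeRank (IncSeqs P)

/-- Height: the rank of the tree of strictly descending sequences. -/
noncomputable def height (P : Type u) [Preorder P] : Ordinal.{u} := treeRank (DecSeqs P)

/-- Maximal order type: the rank of the tree of bad sequences. -/
noncomputable def mot (P : Type u) [Preorder P] : Ordinal.{u} := treeRank (BadSeqs P)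

/-- Finite antichain condition. -/
def FAC (P : Type u) [Preorder P] : Prop :=
  ∀ A : Set P, IsAntichain (· ≤ ·) A → A.Finite

/-- Well quasi-order: every infinite sequence is good. -/
def IsWQO (P : Type u) [Preorder P] : Prop :=
  ∀ f : ℕ → P, ∃ i j : ℕ, i < j ∧ f i ≤ f j

/-- Well partial order. -/
def IsWPO (P : Type u) [Preorder P] : Prop :=
  WellFounded ((· < ·) : P → P → Prop) ∧ FAC P

/- generic rank lemmas -/
section generic

variable {β : Type} {r : β → β → Prop}

theorem acc_rank_le {F : β → Ordinal} (hF : ∀ a b, r a b → F a < F b)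
    {a : β} (h : Acc r a) : h.rank ≤ F a := by
  induction h with
  | intro a ha ih =>
    rw [Acc.rank_eq]
    apply Ordinal.iSup_le
    rintro ⟨b, hb⟩
    have h1 : (Acc.intro a ha).rank = (Acc.intro a ha).rank := rfl
    have hle : ((Acc.intro a ha).inv hb).rank ≤ F b := by
      have := ih b hb
      rwa [Subsingleton.elim ((Acc.intro a ha).inv hb) (ha b hb)]
    exact Order.succ_le_iff.2 (hle.trans_lt (hF b a hb))

theorem relRank_le_of_dec {F : β → Ordinal} (hF : ∀ a b, r a b → F a < F b)
    {Λ : Ordinal} (hΛ : ∀ a, Order.succ (F a) ≤ Λ) : relRank r ≤ Λ := by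
  have wf : WellFounded r :=
    Subrelation.wf (fun {a b} h => (hF a b h : InvImage (· < ·) F a b))
      (InvImage.wf F wellFounded_lt)
  rw [relRank, dif_pos wf]
  apply Ordinal.iSup_le
  intro a
  exact (Order.succ_le_succ (acc_rank_le hF (wf.apply a))).trans (hΛ a)

theorem le_relRank (wf : WellFounded r) (a : β) :
    Order.succ ((wf.apply a).rank) ≤ relRank r := by
  rw [relRank, dif_pos wf]
  exact Ordinal.le_iSup (fun a : β => Order.succ ((wf.apply a).rank)) a

theorem succ_rank_le_of_rel (wf : WellFounded r) {a b : β} (h : r a b) :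
    Order.succ ((wf.apply a).rank) ≤ (wf.apply b).rank :=
  Order.succ_le_iff.2 (by
    have := Acc.rank_lt_of_rel (wf.apply b) h
    rwa [Subsingleton.elim (wf.apply a) ((wf.apply b).inv h)])

end generic

abbrev P3 : Type := ℕ × ℕ × ℕ

def co : Fin 3 → P3 → ℕ
  | 0, p => p.1
  | 1, p => p.2.1
  | 2, p => p.2.2

def o1 : Fin 3 → P3 → ℕ
  | 0, p => p.2.1
  | 1, p => p.2.2
  | 2, p => p.1

def o2 : Fin 3 → P3 → ℕ
  | 0, p => p.2.2
  | 1, p => p.1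
  | 2, p => p.2.1

def incomp (p q : P3) : Prop := ¬ p ≤ q ∧ ¬ q ≤ p

lemma incomp_symm {p q : P3} (h : incomp p q) : incomp q p := ⟨h.2, h.1⟩

lemma le_defn {p q : P3} : p ≤ q ↔ p.1 ≤ q.1 ∧ p.2.1 ≤ q.2.1 ∧ p.2.2 ≤ q.2.2 := by
  rw [Prod.le_def, Prod.le_def]

lemma os_eq (i : Fin 3) (b : P3) : o1 i b + o2 i b = o1 i b + o2 i b := rfl

lemma incomp_struct (i : Fin 3) {p q : P3} (h : incomp p q) (hc : co i p = co i q) :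
    (o1 i p < o1 i q ∧ o2 i q < o2 i p) ∨ (o1 i q < o1 i p ∧ o2 i p < o2 i q) := by
  obtain ⟨h1, h2⟩ := h
  rw [le_defn] at h1 h2
  fin_cases i <;> simp [co, o1, o2] at hc ⊢ <;> omega

lemma not_ge_ex (p q : P3) (h : ¬ q ≤ p) : ∃ i, co i p < co i q := by
  rw [le_defn] at h
  by_contra hc
  push_neg at hc
  exact h ⟨by have := hc 0; simpa [co] using this,
    by have := hc 1; simpa [co] using this,
    by have := hc 2; simpa [co] using this⟩

/-- counting lemma: an antichain inside a hyperplane `co i · = c` containing `b`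
has length at most `o1 i b + o2 i b + 1`. -/
lemma count_le (i : Fin 3) (b : P3) (L : List P3) (hL : L.Pairwise incomp)
    (hco : ∀ p ∈ L, co i p = co i b) (hb : b ∈ L) :
    L.length ≤ o1 i b + o2 i b + 1 := by
  classical
  set φ : P3 → ℕ := fun p =>
    if p = b then o1 i b else if o1 i p < o1 i b then o1 i p else o1 i b + 1 + o2 i p with hφ
  have hmem : ∀ p ∈ L, p = b ∨ ((o1 i p < o1 i b ∧ o2 i b < o2 i p) ∨
      (o1 i b < o1 i p ∧ o2 i p < o2 i b)) := by
    intro p hp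
    by_cases hpb : p = b
    · exact Or.inl hpb
    · refine Or.inr (incomp_struct i ?_ (hco p hp))
      haveI : Std.Symm incomp := ⟨fun _ _ => incomp_symm⟩
      exact hL.forall hp hb hpb
  -- the map is bounded
  have hbound : ∀ p ∈ L, φ p ≤ o1 i b + o2 i b := by
    intro p hp
    rcases hmem p hp with rfl | hstr
    · simp [hφ]
    · simp only [hφ]
      split
      · omega
      · split <;> omega
  -- the mapped list is nodup
  have hnd : (L.map φ).Nodup := by
    rw [List.Nodup, List.pairwise_map]
    refine hL.imp_of_mem ?_
    intro p q hp hq hinc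
    have hpq : p ≠ q := fun h => hinc.1 (h ▸ le_rfl)
    have h2 := incomp_struct i hinc (by rw [hco p hp, hco q hq])
    by_cases hpb : p = b <;> by_cases hqb : q = b
    · exact absurd (hpb.trans hqb.symm) hpq
    · have hq2 := (hmem q hq).resolve_left hqb
      have e1 : φ p = o1 i b := by simp [hφ, hpb]
      rw [e1]
      simp only [hφ, if_neg hqb]
      rcases hq2 with hq2 | hq2 <;> split <;> omega
    · have hp2 := (hmem p hp).resolve_left hpb
      have e1 : φ q = o1 i b := by simp [hφ, hqb]
      rw [e1]
      simp only [hφ, if_neg hpb]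
      rcases hp2 with hp2 | hp2 <;> split <;> omega
    · have hp2 := (hmem p hp).resolve_left hpb
      have hq2 := (hmem q hq).resolve_left hqb
      simp only [hφ, if_neg hpb, if_neg hqb]
      rcases h2 with h2 | h2 <;> rcases hp2 with hp2 | hp2 <;>
        rcases hq2 with hq2 | hq2 <;> split <;> split <;> omega
  have hlen : (L.map φ).toFinset.card = L.length := by
    rw [List.toFinset_card_of_nodup hnd, List.length_map]
  have hsub : (L.map φ).toFinset ⊆ Finset.range (o1 i b + o2 i b + 1) := by
    intro x hx
    rw [List.mem_toFinset, List.mem_map] at hx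
    obtain ⟨p, hp, rfl⟩ := hx
    rw [Finset.mem_range]
    exact Nat.lt_succ_of_le (hbound p hp)
  calc L.length = (L.map φ).toFinset.card := hlen.symm
    _ ≤ (Finset.range (o1 i b + o2 i b + 1)).card := Finset.card_le_card hsub
    _ = o1 i b + o2 i b + 1 := Finset.card_range _

/-! the decreasing labeling -/

def flt (i : Fin 3) (v : ℕ) (l : List P3) : List P3 := l.filter (fun p => co i p = v)

def capN (i : Fin 3) (v : ℕ) (l : List P3) : ℕ :=
  o1 i (flt i v l).headI + o2 i (flt i v l).headI + 1 - (flt i v l).length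

def gN (l : List P3) : ℕ :=
  ∑ i : Fin 3, ((Finset.range (co i l.headI)).filter (fun v => flt i v l = [])).card

def hN (l : List P3) : ℕ :=
  ∑ i : Fin 3, ∑ v ∈ Finset.range (co i l.headI), capN i v l

noncomputable def fo (l : List P3) : Ordinal.{0} := omega0 * gN l + hN l

lemma flt_append (i : Fin 3) (v : ℕ) (l₁ l₂ : List P3) :
    flt i v (l₁ ++ l₂) = flt i v l₁ ++ flt i v l₂ := List.filter_append _ _

lemma fo_step {l : List P3} {q : P3} (hl : l ≠ [])
    (hT : (l ++ [q]) ∈ IncSeqs P3) : fo (l ++ [q]) < fo l := by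
  classical
  obtain ⟨x, t, rfl⟩ := List.exists_cons_of_ne_nil hl
  set l : List P3 := x :: t with hldef
  have hhead : (l ++ [q]).headI = l.headI := rfl
  have hpw : (l ++ [q]).Pairwise incomp := hT.2
  have hq : ∀ p ∈ l, incomp p q := by
    rw [List.pairwise_append] at hpw
    intro p hp
    exact hpw.2.2 p hp q (List.mem_singleton_self q)
  -- q is below the head in some coordinate
  have hx : x ∈ l := List.mem_cons_self
  have hxq : incomp x q := hq x hx
  obtain ⟨i₀, hi₀⟩ : ∃ i, co i q < co i x := not_ge_ex q x hxq.1
  have hhx : l.headI = x := rfl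
  -- basic facts about filters of the extension
  have hflt : ∀ i v, flt i v (l ++ [q]) = flt i v l ++ flt i v [q] := fun i v => flt_append ..
  have hfq : ∀ i v, co i q = v → flt i v [q] = [q] := by
    intro i v h; simp [flt, h]
  have hfq' : ∀ i v, co i q ≠ v → flt i v [q] = [] := by
    intro i v h; simp [flt, h]
  by_cases hcase : ∃ i, co i q < co i x ∧ flt i (co i q) l = []
  · -- a fresh hyperplane is hit : gN decreases
    obtain ⟨i₁, hlt₁, hemp₁⟩ := hcase
    have hg : gN (l ++ [q]) < gN l := by
      unfold gN
      rw [hhead]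
      apply Finset.sum_lt_sum
      · intro i _
        apply Finset.card_le_card
        intro v hv
        rw [Finset.mem_filter] at hv ⊢
        refine ⟨hv.1, ?_⟩
        have := hv.2
        rw [hflt] at this
        exact (List.append_eq_nil_iff.1 this).1
      · refine ⟨i₁, Finset.mem_univ _, ?_⟩
        apply Finset.card_lt_card
        constructor
        · intro v hv
          rw [Finset.mem_filter] at hv ⊢
          refine ⟨hv.1, ?_⟩
          have := hv.2
          rw [hflt] at this
          exact (List.append_eq_nil_iff.1 this).1
        · intro hsub
          have h1 : co i₁ q ∈ (Finset.range (co i₁ l.headI)).filter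
              (fun v => flt i₁ v l = []) := by
            rw [Finset.mem_filter, Finset.mem_range, hhx]
            exact ⟨hlt₁, hemp₁⟩
          have h2 := hsub h1
          rw [Finset.mem_filter] at h2
          have := h2.2
          rw [hflt, hemp₁, List.nil_append, hfq i₁ (co i₁ q) rfl] at this
          exact List.cons_ne_nil q [] this
    have hcast : (gN (l ++ [q]) : Ordinal) + 1 ≤ (gN l : Ordinal) := by
      rw [← Nat.cast_add_one, Nat.cast_le]
      exact hg
    calc fo (l ++ [q]) = omega0 * (gN (l ++ [q]) : Ordinal) + (hN (l ++ [q]) : Ordinal) := rfl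
      _ < omega0 * (gN (l ++ [q]) : Ordinal) + omega0 :=
          add_lt_add_right (nat_lt_omega0 _) _
      _ = omega0 * ((gN (l ++ [q]) : Ordinal) + 1) := (mul_add_one omega0 _).symm
      _ ≤ omega0 * (gN l : Ordinal) := mul_le_mul_right hcast _
      _ ≤ fo l := le_self_add
  · -- all hyperplanes hit by q are occupied : gN is unchanged, hN decreases
    push_neg at hcase
    have hgeq : gN (l ++ [q]) = gN l := by
      unfold gN
      rw [hhead]
      apply Finset.sum_congr rfl
      intro i _
      congr 1
      apply Finset.filter_congr
      intro v hv
      rw [Finset.mem_range, hhx] at hv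
      rw [hflt]
      constructor
      · intro h; exact (List.append_eq_nil_iff.1 h).1
      · intro h
        rw [h, List.nil_append]
        by_cases hco : co i q = v
        · exact absurd (hco ▸ h) (hcase i (hco ▸ hv))
        · exact hfq' i v hco
    have hcap_le : ∀ i v, v < co i x → capN i v (l ++ [q]) ≤ capN i v l ∧
        (co i q = v → capN i v (l ++ [q]) < capN i v l) := by
      intro i v hv
      by_cases hco : co i q = v
      · -- the occupied hyperplane case
        have hne : flt i v l ≠ [] := hco ▸ hcase i (hco ▸ hv)
        obtain ⟨y, M, hM⟩ := List.exists_cons_of_ne_nil hne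
        have hL : flt i v (l ++ [q]) = y :: (M ++ [q]) := by
          rw [hflt, hfq i v hco, hM]; rfl
        -- counting lemma applied to the extended filter
        have hcount : (flt i v (l ++ [q])).length ≤
            o1 i y + o2 i y + 1 := by
          apply count_le i y
          · exact hpw.sublist (List.filter_sublist)
          · intro p hp
            have hpy : co i p = v := by
              have := List.of_mem_filter hp
              simpa using this
            have hyy : co i y = v := by
              have : y ∈ flt i v (l ++ [q]) := by rw [hL]; exact List.mem_cons_self
              have := List.of_mem_filter this
              simpa using this
            rw [hpy, hyy]
          · rw [hL]; exact List.mem_cons_self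
        have hlen : (flt i v (l ++ [q])).length = (flt i v l).length + 1 := by
          rw [hflt, hfq i v hco, List.length_append, List.length_singleton]
        have hhd : (flt i v (l ++ [q])).headI = (flt i v l).headI := by
          rw [hL, hM]; rfl
        have hhd2 : (flt i v (l ++ [q])).headI = y := by rw [hL]; rfl
        constructor
        · unfold capN
          rw [hhd, hlen]
          omega
        · intro _
          have hhdl : (flt i v l).headI = y := by rw [hM]; rfl
          rw [hlen] at hcount
          unfold capN
          rw [hhd2, hlen, hhdl]
          omega
      · -- q is not in this hyperplane : nothing changes
        have : flt i v (l ++ [q]) = flt i v l := by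
          rw [hflt, hfq' i v hco, List.append_nil]
        constructor
        · unfold capN; rw [this]
        · intro h; exact absurd h hco
    have hh : hN (l ++ [q]) < hN l := by
      unfold hN
      rw [hhead]
      apply Finset.sum_lt_sum
      · intro i _
        apply Finset.sum_le_sum
        intro v hv
        rw [Finset.mem_range, hhx] at hv
        exact (hcap_le i v hv).1
      · refine ⟨i₀, Finset.mem_univ _, ?_⟩
        apply Finset.sum_lt_sum
        · intro v hv
          rw [Finset.mem_range, hhx] at hv
          exact (hcap_le i₀ v hv).1
        · refine ⟨co i₀ q, by rw [Finset.mem_range, hhx]; exact hi₀, ?_⟩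
          exact ((hcap_le i₀ (co i₀ q) (hhx ▸ hi₀)).2 rfl)
    show omega0 * (gN (l ++ [q]) : Ordinal) + (hN (l ++ [q]) : Ordinal) <
      omega0 * (gN l : Ordinal) + (hN l : Ordinal)
    rw [hgeq]
    exact add_lt_add_right (Nat.cast_lt.2 hh) _

lemma fo_ext {l l' : List P3} (hne : l ≠ []) (hT : l' ∈ IncSeqs P3)
    (hpre : l <+: l') (hneq : l ≠ l') : fo l' < fo l := by
  obtain ⟨s, rfl⟩ := hpre
  have hs : s ≠ [] := by rintro rfl; simp at hneq
  have main : ∀ s : List P3, (l ++ s).Pairwise incomp → s ≠ [] → fo (l ++ s) < fo l := by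
    intro s
    induction s using List.reverseRecOn with
    | nil => intro _ h; exact absurd rfl h
    | append_singleton s₀ q ih =>
      intro hpw _
      have hT' : ((l ++ s₀) ++ [q]) ∈ IncSeqs P3 := by
        refine ⟨by simp [hne], ?_⟩
        rw [List.append_assoc]; exact hpw
      have hstep : fo ((l ++ s₀) ++ [q]) < fo (l ++ s₀) :=
        fo_step (by simp [hne]) hT'
      rcases eq_or_ne s₀ [] with rfl | hs₀
      · simpa using hstep
      · have hsub : List.Sublist (l ++ s₀) (l ++ (s₀ ++ [q])) := by
          rw [← List.append_assoc]
          exact List.sublist_append_left _ _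
        have h2 := ih (hpw.sublist hsub) hs₀
        calc fo (l ++ (s₀ ++ [q])) = fo ((l ++ s₀) ++ [q]) := by rw [List.append_assoc]
          _ < fo (l ++ s₀) := hstep
          _ < fo l := h2
  exact main s hT.2 hs

lemma wf_inc : WellFounded (extRel (IncSeqs P3)) := by
  have : ∀ a b : ↥(IncSeqs P3), extRel (IncSeqs P3) a b → fo a.1 < fo b.1 := by
    rintro a b ⟨hpre, hneq⟩
    exact fo_ext b.2.1 a.2 hpre hneq
  exact Subrelation.wf (fun {a b} h => (this a b h : InvImage (· < ·) (fun x => fo x.1) a b))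
    (InvImage.wf _ wellFounded_lt)

theorem width_le : relRank (extRel (IncSeqs P3)) ≤ omega0 * omega0 := by
  apply relRank_le_of_dec (F := fun a : ↥(IncSeqs P3) => fo a.1)
  · rintro a b ⟨hpre, hneq⟩
    exact fo_ext b.2.1 a.2 hpre hneq
  · intro a
    rw [Order.succ_le_iff]
    have h1 : fo a.1 < omega0 * ((gN a.1 : Ordinal) + 1) := by
      rw [mul_add_one]
      exact add_lt_add_right (nat_lt_omega0 _) _
    have h2 : omega0 * ((gN a.1 : Ordinal) + 1) ≤ omega0 * omega0 := by
      apply mul_le_mul_right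
      rw [← Nat.cast_add_one]
      exact (nat_lt_omega0 _).le
    exact h1.trans_le h2

/-! lower bound -/

def Gcond (X n m : ℕ) (l : List P3) : Prop :=
  ∀ p : P3, X ≤ p.1 → (p.2.2 < m ∨ (p.2.2 = m ∧ p.2.1 < n)) → ∀ b ∈ l, incomp p b

lemma succ_case (wf : WellFounded (extRel (IncSeqs P3))) (m n : ℕ)
    (IH : ∀ X (l : ↥(IncSeqs P3)), Gcond X n m l.1 →
      omega0 * m + n ≤ (wf.apply l).rank) :
    ∀ X (l : ↥(IncSeqs P3)), Gcond X (n+1) m l.1 →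
      omega0 * m + (n+1 : ℕ) ≤ (wf.apply l).rank := by
  intro X l hG
  set q : P3 := (X, n, m) with hqdef
  have hq_in : ∀ b ∈ l.1, incomp q b :=
    fun b hb => hG q (le_refl X) (Or.inr ⟨rfl, Nat.lt_succ_self n⟩) b hb
  have hT' : (l.1 ++ [q]) ∈ IncSeqs P3 := by
    refine ⟨by simp [l.2.1], ?_⟩
    rw [List.pairwise_append]
    refine ⟨l.2.2, List.pairwise_singleton _ _, ?_⟩
    intro b hb q' hq'
    rw [List.mem_singleton] at hq'
    subst hq'
    exact incomp_symm (hq_in b hb)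
  set l' : ↥(IncSeqs P3) := ⟨l.1 ++ [q], hT'⟩ with hl'def
  have hrel : extRel (IncSeqs P3) l' l := by
    refine ⟨List.prefix_append _ _, ?_⟩
    intro h
    have := congrArg List.length h
    simp [hl'def] at this
  have hG' : Gcond (X+1) n m l'.1 := by
    intro p hx hc b hb
    rw [List.mem_append] at hb
    rcases hb with hb | hb
    · refine hG p (by omega) ?_ b hb
      rcases hc with h | h
      · exact Or.inl h
      · exact Or.inr ⟨h.1, by omega⟩
    · rw [List.mem_singleton] at hb
      subst hb
      constructor
      · intro hle
        rw [le_defn] at hle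
        have : p.1 ≤ X := hle.1
        omega
      · intro hle
        rw [le_defn] at hle
        have h1 : (n : ℕ) ≤ p.2.1 := hle.2.1
        have h2 : (m : ℕ) ≤ p.2.2 := hle.2.2
        rcases hc with h | h <;> omega
  have hmain : omega0 * m + n ≤ (wf.apply l').rank := IH (X+1) l' hG'
  have hstep : Order.succ ((wf.apply l').rank) ≤ (wf.apply l).rank :=
    succ_rank_le_of_rel wf hrel
  calc omega0 * m + (n+1 : ℕ) = Order.succ (omega0 * m + n) := by
        rw [Nat.cast_add_one, ← add_assoc, Ordinal.add_one_eq_succ]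
    _ ≤ Order.succ ((wf.apply l').rank) := Order.succ_le_succ hmain
    _ ≤ (wf.apply l).rank := hstep

lemma lower (wf : WellFounded (extRel (IncSeqs P3))) :
    ∀ (m n : ℕ) (X : ℕ) (l : ↥(IncSeqs P3)), Gcond X n m l.1 →
      omega0 * m + n ≤ (wf.apply l).rank := by
  intro m
  induction m with
  | zero =>
    intro n
    induction n with
    | zero =>
      intro X l _
      simp
    | succ n ih => exact succ_case wf 0 n ih
  | succ m ihm =>
    have base : ∀ X (l : ↥(IncSeqs P3)), Gcond X 0 (m+1) l.1 →
        omega0 * (m+1 : ℕ) ≤ (wf.apply l).rank := by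
      intro X l hG
      have hGm : ∀ n' : ℕ, Gcond X n' m l.1 := by
        intro n' p hx hc b hb
        refine hG p hx ?_ b hb
        left
        rcases hc with h | h <;> omega
      have : (((m+1 : ℕ) : Ordinal)) = (m : Ordinal) + 1 := Nat.cast_add_one m
      rw [this, mul_add_one]
      rw [add_le_iff_of_isSuccLimit isSuccLimit_omega0]
      intro b' hb'
      obtain ⟨n', rfl⟩ := lt_omega0.1 hb'
      exact ihm n' X l (hGm n')
    intro n
    induction n with
    | zero =>
      intro X l hG
      simpa using base X l hG
    | succ n ih => exact succ_case wf (m+1) n ih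

theorem width_ge : omega0 * omega0 ≤ relRank (extRel (IncSeqs P3)) := by
  have key : ∀ m : ℕ, omega0 * m ≤ relRank (extRel (IncSeqs P3)) := by
    intro m
    have hmem : [((0 : ℕ), (0 : ℕ), (m+1 : ℕ))] ∈ IncSeqs P3 :=
      ⟨List.cons_ne_nil _ _, List.pairwise_singleton _ _⟩
    set l : ↥(IncSeqs P3) := ⟨[((0 : ℕ), (0 : ℕ), (m+1 : ℕ))], hmem⟩ with hldef
    have hG : Gcond 1 0 m l.1 := by
      intro p hx hc b hb
      rw [List.mem_singleton] at hb
      subst hb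
      constructor
      · intro hle
        rw [le_defn] at hle
        have : p.1 ≤ 0 := hle.1
        omega
      · intro hle
        rw [le_defn] at hle
        have : m + 1 ≤ p.2.2 := hle.2.2
        rcases hc with h | h <;> omega
    have h1 : omega0 * m ≤ (wf_inc.apply l).rank := by
      have := lower wf_inc m 0 1 l hG
      simpa using this
    have h2 : (wf_inc.apply l).rank ≤ relRank (extRel (IncSeqs P3)) :=
      ((Order.lt_succ _).le.trans (le_relRank wf_inc l))
    exact h1.trans h2
  by_contra hcon
  rw [not_le] at hcon
  obtain ⟨c, hc, hlt⟩ := (lt_mul_iff_of_isSuccLimit isSuccLimit_omega0).1 hcon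
  obtain ⟨m, rfl⟩ := lt_omega0.1 hc
  exact absurd ((key m).trans_lt hlt) (lt_irrefl _)

/-- `w(ω × ω × ω) = ω²` for the componentwise order. -/
theorem stmt_19 : width (ℕ × ℕ × ℕ) = Ordinal.omega0 ^ (2 : ℕ) := by
  have h2 : Ordinal.omega0 ^ (2 : ℕ) = omega0 * omega0 := by
    rw [pow_two]
  rw [h2]
  have h3 : width (ℕ × ℕ × ℕ) = relRank (extRel (IncSeqs P3)) := rfl
  rw [h3]
  exact le_antisymm width_le width_ge
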